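/- Let μ be a finite positive Borel measure on ℂ with compact support. If the sequence of monomials (e_k)_{k∈ℕ} is a Bessel sequence in L²(μ), then μ({z ∈ ℂ : |z| > 1}) = 0. -/

import Mathlib

open MeasureTheory

/-- The monomials `(z^k)_{k∈ℕ}` form a Bessel sequence in `L²(μ)` with bound `C`:
`∑_k |⟨g, e_k⟩_{L²(μ)}|² ≤ C‖g‖²_{L²(μ)}` for every `g ∈ L²(μ)`
(stated via finite partial sums). -/
def MonomialsBesselWith (μ : Measure ℂ) (C : ℝ) : Prop :=
  ∀ g : ℂ → ℂ, MemLp g 2 μ → ∀ F : Finset ℕ,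
    ∑ k ∈ F, ‖∫ z, g z * (starRingEnd ℂ) (z ^ k) ∂μ‖ ^ 2 ≤ C * ∫ z, ‖g z‖ ^ 2 ∂μ

theorem stmt_1 (μ : Measure ℂ) [IsFiniteMeasure μ]
    (hsupp : ∃ R : ℝ, μ {z : ℂ | R < ‖z‖} = 0)
    (hB : ∃ C > 0, MonomialsBesselWith μ C) :
    μ {z : ℂ | 1 < ‖z‖} = 0 := by
  by_contra hμ
  obtain ⟨C, hC, hBessel⟩ := hB
  obtain ⟨R, hR⟩ := hsupp
  set M : ℝ := max R 1 with hM
  have hM1 : (1:ℝ) ≤ M := le_max_right R 1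
  have hM0 : (0:ℝ) ≤ M := le_trans zero_le_one hM1
  have hMae : ∀ᵐ z ∂μ, ‖z‖ ≤ M := by
    rw [ae_iff]
    refine measure_mono_null ?_ hR
    intro z hz
    simp only [Set.mem_setOf_eq, not_le] at hz ⊢
    exact lt_of_le_of_lt (le_max_left R 1) hz
  have hex : ∃ r : ℝ, 1 < r ∧ μ {z : ℂ | r ≤ ‖z‖} ≠ 0 := by
    by_contra h
    push_neg at h
    apply hμ
    have hsub : {z : ℂ | 1 < ‖z‖} ⊆
        ⋃ m : ℕ, {z : ℂ | 1 + 1/(m+1) ≤ ‖z‖} := by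
      intro z hz
      simp only [Set.mem_setOf_eq] at hz
      obtain ⟨m, hm⟩ := exists_nat_one_div_lt (sub_pos.mpr hz)
      refine Set.mem_iUnion.mpr ⟨m, ?_⟩
      simp only [Set.mem_setOf_eq]
      have : (1:ℝ)/(m+1) < ‖z‖ - 1 := by exact_mod_cast hm
      linarith
    refine measure_mono_null hsub ?_
    rw [measure_iUnion_null_iff]
    intro m
    refine h (1 + 1/(m+1)) ?_
    have : (0:ℝ) < 1/(m+1) := by positivity
    linarith
  obtain ⟨r, hr1, hrμ⟩ := hex
  have hr0 : (0:ℝ) ≤ r := le_trans zero_le_one hr1.le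
  set A := {z : ℂ | r ≤ ‖z‖} with hA
  have hAmeas : MeasurableSet A :=
    (isClosed_le continuous_const continuous_norm).measurableSet
  set ε : ℝ := (μ A).toReal with hε
  have hε0 : 0 < ε := ENNReal.toReal_pos hrμ (measure_ne_top μ A)
  -- choose n
  obtain ⟨n, hn⟩ := pow_unbounded_of_one_lt (C / ε) (by nlinarith : (1:ℝ) < r^2)
  have hrn : C < r ^ (2*n) * ε := by
    have : C / ε < r ^ (2*n) := by
      calc C / ε < (r^2)^n := hn
      _ = r ^ (2*n) := by rw [← pow_mul]
    calc C = (C / ε) * ε := by field_simp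
    _ < r ^ (2*n) * ε := by exact mul_lt_mul_of_pos_right this hε0
  set f : ℂ → ℝ := fun z => ‖z‖ ^ (2*n) with hf
  set g : ℂ → ℂ := A.indicator (fun z => z ^ n) with hg
  -- Memℒp g 2 μ
  have hgmeas : AEStronglyMeasurable g μ :=
    ((measurable_id.pow_const n).indicator hAmeas).aestronglyMeasurable
  have hgbd : ∀ᵐ z ∂μ, ‖g z‖ ≤ M ^ n := by
    filter_upwards [hMae] with z hz
    by_cases hzA : z ∈ A
    · simp only [hg, Set.indicator_of_mem hzA, norm_pow]
      exact pow_le_pow_left₀ (norm_nonneg z) hz n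
    · simp only [hg, Set.indicator_of_notMem hzA, norm_zero]
      positivity
  have hgL2 : MemLp g 2 μ := MemLp.of_bound hgmeas (M ^ n) hgbd
  -- integrability of indicator f
  have hfind : Integrable (A.indicator f) μ := by
    refine Integrable.mono' (integrable_const (M ^ (2*n))) ?_ ?_
    · exact ((continuous_norm.measurable.pow_const (2*n)).indicator hAmeas).aestronglyMeasurable
    · filter_upwards [hMae] with z hz
      by_cases hzA : z ∈ A
      · simp only [Set.indicator_of_mem hzA, hf, Real.norm_eq_abs]
        rw [abs_of_nonneg (by positivity)]
        exact pow_le_pow_left₀ (norm_nonneg z) hz _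
      · simp only [Set.indicator_of_notMem hzA, norm_zero]
        positivity
  have hfInt : IntegrableOn f A μ := (integrable_indicator_iff hAmeas).mp hfind
  set I : ℝ := ∫ z in A, f z ∂μ with hI
  have hIlow : r ^ (2*n) * ε ≤ I := by
    rw [mul_comm]
    refine setIntegral_ge_of_const_le hAmeas (measure_ne_top μ A) ?_ hfInt
    intro x hx
    exact pow_le_pow_left₀ hr0 hx _
  have hIpos : 0 < I := lt_of_lt_of_le (by positivity) hIlow
  -- compute inner integral
  have hinner : ∫ z, g z * (starRingEnd ℂ) (z ^ n) ∂μ = (I : ℂ) := by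
    have hpt : ∀ z, g z * (starRingEnd ℂ) (z ^ n) =
        A.indicator (fun z => ((f z : ℝ) : ℂ)) z := by
      intro z
      by_cases hzA : z ∈ A
      · simp only [hg, Set.indicator_of_mem hzA, hf]
        rw [Complex.mul_conj]
        norm_cast
        rw [Complex.normSq_eq_norm_sq, norm_pow, ← pow_mul, mul_comm n 2]
      · simp [hg, Set.indicator_of_notMem hzA]
    simp_rw [hpt]
    rw [integral_indicator hAmeas]; exact integral_ofReal
  have hnorm2 : ∀ z, ‖g z‖ ^ 2 = A.indicator f z := by
    intro z
    by_cases hzA : z ∈ A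
    · simp only [hg, Set.indicator_of_mem hzA, hf, norm_pow]
      rw [← pow_mul, mul_comm n 2]
    · simp [hg, Set.indicator_of_notMem hzA]
  have key := hBessel g hgL2 {n}
  rw [Finset.sum_singleton, hinner] at key
  simp_rw [hnorm2] at key
  rw [integral_indicator hAmeas] at key
  have hnormI : ‖(I : ℂ)‖ = I := by
    rw [Complex.norm_real, Real.norm_eq_abs, abs_of_pos hIpos]
  rw [hnormI] at key
  -- key : I^2 ≤ C * I
  have hIC : I ≤ C := by nlinarith
  nlinarith
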